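/- arXiv:1708.04850 — 2 statements merged into one kernel-verified Lean document; each statement's English description precedes it below -/
import Mathlib

section
/- Let u,v ∈ V satisfy ⟨u,αᵢ∨⟩ ≥ 0 and ⟨v,αᵢ∨⟩ ≥ 0 for all i=1,…,n (i.e. u,v lie in the closed fundamental chamber). Then Π(u) ⊆ Π(v) if and only if v−u is a nonnegative real linear combination of the simple roots. Consequently, for dominant weights μ,λ ∈ P, Π^Q(μ) ⊆ Π^Q(λ) if and only if λ−μ is a nonnegative integer combination of the simple roots. -/
open RealInnerProductSpace Pointwise

noncomputable section

variable {V : Type*} [NormedAddCommGroup V] [InnerProductSpace ℝ V]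

/-- The coroot `α∨ = 2α/⟨α,α⟩` associated to a vector `α`. -/
def coroot (α : V) : V := (2 / ⟪α, α⟫) • α

/-- The reflection `s_α(v) = v − ⟨v,α∨⟩α` across the hyperplane orthogonal to `α`. -/
def sRefl (α : V) (v : V) : V := v - ⟪v, coroot α⟫ • α

/-- An irreducible reduced crystallographic root system in the real inner product
space `V`, together with a chosen set of positive roots and simple roots. -/
structure RootSystemData (V : Type*) [NormedAddCommGroup V] [InnerProductSpace ℝ V] where
  n : ℕ
  roots : Set V
  roots_finite : roots.Finite
  roots_nonzero : (0 : V) ∉ roots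
  roots_span : Submodule.span ℝ roots = ⊤
  refl_mem : ∀ α ∈ roots, ∀ β ∈ roots, sRefl α β ∈ roots
  reduced : ∀ α ∈ roots, ∀ c : ℝ, c • α ∈ roots → c • α = α ∨ c • α = -α
  crystallographic : ∀ α ∈ roots, ∀ β ∈ roots, ∃ m : ℤ, ⟪β, coroot α⟫ = (m : ℝ)
  pos : Set V
  pos_subset : pos ⊆ roots
  pos_union : roots = pos ∪ (-pos)
  simple : Fin n → V
  simple_mem : ∀ i, simple i ∈ pos
  simple_li : LinearIndependent ℝ simple
  simple_span : Submodule.span ℝ (Set.range simple) = ⊤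
  pos_combo : ∀ α ∈ pos, ∃ c : Fin n → ℕ, α = ∑ i, (c i : ℝ) • simple i
  irred : ∀ S₁ S₂ : Set V, roots = S₁ ∪ S₂ →
    (∀ α ∈ S₁, ∀ β ∈ S₂, ⟪α, β⟫ = 0) → S₁ = ∅ ∨ S₂ = ∅

namespace RootSystemData

variable (R : RootSystemData V)

/-- The Weyl group `W`: all finite compositions of reflections in roots. -/
def weyl : Set (V → V) :=
  {w | ∃ l : List V, (∀ α ∈ l, α ∈ R.roots) ∧ w = (l.map sRefl).foldr (· ∘ ·) id}

/-- The orbit `W(v)` of a vector under the Weyl group. -/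
def orbit (v : V) : Set V := {u | ∃ w ∈ R.weyl, u = w v}

/-- The weight lattice `P`. -/
def weightLattice : Set V :=
  {v | ∀ α ∈ R.roots, ∃ m : ℤ, ⟪v, coroot α⟫ = (m : ℝ)}

/-- The permutohedron `Π(v) = ConvexHull W(v)`. -/
def perm (v : V) : Set V := convexHull ℝ (R.orbit v)

/-- The discrete permutohedron `Π^Q(λ) = Π(λ) ∩ (Q+λ)`. -/
def permQ (lam : V) : Set V :=
  R.perm lam ∩ {v | v - lam ∈ Submodule.span ℤ R.roots}

/-- Dominance: nonnegative pairing with all simple coroots. -/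
def IsDominant (v : V) : Prop := ∀ i, 0 ≤ ⟪v, coroot (R.simple i)⟫

/-- `W`-invariance of a function `𝐤 : Φ → ℕ`. -/
def IsWInvariant (k : V → ℕ) : Prop := ∀ w ∈ R.weyl, ∀ α ∈ R.roots, k (w α) = k α

/-- Symmetric interval-firing: `λ → λ+α` for `α ∈ Φ⁺` whenever
`⟨λ,α∨⟩+1 ∈ {−𝐤(α),…,𝐤(α)}`. -/
def symFire (k : V → ℕ) (lam mu : V) : Prop :=
  lam ∈ R.weightLattice ∧ ∃ α ∈ R.pos, mu = lam + α ∧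
    -(k α : ℝ) ≤ ⟪lam, coroot α⟫ + 1 ∧ ⟪lam, coroot α⟫ + 1 ≤ (k α : ℝ)

/-- Truncated interval-firing: `λ → λ+α` for `α ∈ Φ⁺` whenever
`⟨λ,α∨⟩+1 ∈ {−𝐤(α)+1,…,𝐤(α)}`. -/
def trFire (k : V → ℕ) (lam mu : V) : Prop :=
  lam ∈ R.weightLattice ∧ ∃ α ∈ R.pos, mu = lam + α ∧
    -(k α : ℝ) + 1 ≤ ⟪lam, coroot α⟫ + 1 ∧ ⟪lam, coroot α⟫ + 1 ≤ (k α : ℝ)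

/-- All roots have the same length. -/
def SimplyLaced : Prop := ∀ α ∈ R.roots, ∀ β ∈ R.roots, ‖α‖ = ‖β‖

/-- A root of maximal length. -/
def IsLongRoot (α : V) : Prop := α ∈ R.roots ∧ ∀ β ∈ R.roots, ‖β‖ ≤ ‖α‖

/-- A root which is not of maximal length. -/
def IsShortRoot (α : V) : Prop := α ∈ R.roots ∧ ¬ R.IsLongRoot α

/-- `𝐤` is good: either `Φ` is simply laced, or `𝐤` vanishing on short roots
implies `𝐤` vanishing on all (in particular long) roots. -/
def IsGood (k : V → ℕ) : Prop :=
  R.SimplyLaced ∨ ((∀ α, R.IsShortRoot α → k α = 0) → ∀ β ∈ R.roots, k β = 0)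

/-- The product of the simple reflections indexed by a word. -/
def wordProd (l : List (Fin R.n)) : V → V :=
  (l.map (fun i => sRefl (R.simple i))).foldr (· ∘ ·) id

/-- Coxeter length: the minimal length of a word in the simple reflections
expressing `w`. -/
def coxLen (w : V → V) : ℕ :=
  sInf {m : ℕ | ∃ l : List (Fin R.n), l.length = m ∧ w = R.wordProd l}

/-- The parabolic subgroup `W_I`: all compositions of simple reflections `s_{αᵢ}`, `i ∈ I`. -/
def weylI (I : Set (Fin R.n)) : Set (V → V) :=
  {w | ∃ l : List (Fin R.n), (∀ i ∈ l, i ∈ I) ∧ w = R.wordProd l}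

/-- The orbit `W_I(v)`. -/
def orbitI (I : Set (Fin R.n)) (v : V) : Set V := {u | ∃ w ∈ R.weylI I, u = w v}

/-- The discrete parabolic permutohedron `Π^Q_I(λ)`. -/
def permQI (I : Set (Fin R.n)) (lam : V) : Set V :=
  convexHull ℝ (R.orbitI I lam) ∩ {v | v - lam ∈ Submodule.span ℤ R.roots}

/-- Given a choice `dm` of dominant representatives, `I^{0,1}_λ` is the set of
indices `i` with `⟨λ_dom, αᵢ∨⟩ ∈ {0,1}`. -/
def I01 (dm : V → V) (lam : V) : Set (Fin R.n) :=
  {i | ⟪dm lam, coroot (R.simple i)⟫ = 0 ∨ ⟪dm lam, coroot (R.simple i)⟫ = 1}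

/-- The minimal length of an `α`-traverse in `Π^Q(λ)`. -/
def traverseLen (lam α : V) : ℕ :=
  sInf {ℓ : ℕ | ∃ mu : V, (∀ i : ℕ, i ≤ ℓ → mu - (i : ℝ) • α ∈ R.permQ lam) ∧
    mu + α ∉ R.permQ lam ∧ mu - ((ℓ : ℝ) + 1) • α ∉ R.permQ lam}

/-- `m_λ(α) = min {cᵢ : αᵢ ∈ W(α)}` where `λ = Σ cᵢ ωᵢ` is dominant,
i.e. `cᵢ = ⟨λ, αᵢ∨⟩`. -/
def mVal (lam α : V) : ℕ :=
  sInf {c : ℕ | ∃ i, R.simple i ∈ R.orbit α ∧ (c : ℝ) = ⟪lam, coroot (R.simple i)⟫}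

/-- Funny weights (only exist when `Φ` is not simply laced). -/
def IsFunny (lam : V) : Prop :=
  ¬ R.SimplyLaced ∧ ∃ l s : Fin R.n, R.IsLongRoot (R.simple l) ∧ R.IsShortRoot (R.simple s) ∧
    ⟪R.simple l, coroot (R.simple s)⟫ ≠ 0 ∧
    ⟪lam, coroot (R.simple s)⟫ = 0 ∧ 1 ≤ ⟪lam, coroot (R.simple l)⟫ ∧
    ∀ i, R.IsLongRoot (R.simple i) → ⟪lam, coroot (R.simple l)⟫ ≤ ⟪lam, coroot (R.simple i)⟫

end RootSystemData

/-- The map `η_𝐤(λ) = λ + w_λ(ρ_𝐤)`, relative to a choice `fw` of fundamental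
weights and a choice `wl` of minimal-length Weyl elements `λ ↦ w_λ`. -/
def etaMap (R : RootSystemData V) (fw : Fin R.n → V) (wl : V → V → V)
    (k : V → ℕ) (lam : V) : V :=
  lam + wl lam (∑ i, (k (R.simple i) : ℝ) • fw i)

/-- Two points are in the same connected component of a relation if they are
related by its reflexive-transitive-symmetric closure. -/
def SameComponent (r : V → V → Prop) (x y : V) : Prop :=
  Relation.ReflTransGen (fun a b => r a b ∨ r b a) x y
section Basics

variable {α x y v : V}

lemma coroot_neg (α : V) : coroot (-α) = - coroot α := by
  simp [coroot, inner_neg_neg]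

lemma sRefl_def (α v : V) : sRefl α v = v - ⟪v, coroot α⟫ • α := rfl

lemma sRefl_neg (α : V) : sRefl (-α) = sRefl α := by
  funext v
  simp [sRefl, coroot_neg, inner_neg_right]

lemma isLinearMap_sRefl (α : V) : IsLinearMap ℝ (sRefl α) := by
  constructor
  · intro x y
    simp only [sRefl, inner_add_left, add_smul]
    abel
  · intro c x; simp [sRefl, inner_smul_left, smul_sub, smul_smul]

lemma inner_coroot_eq' {α v : V} : ⟪v, coroot α⟫ = (2 / ⟪α, α⟫) * ⟪v, α⟫ := by
  simp [coroot, real_inner_smul_right]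

lemma inner_coroot_self {α : V} (hα : α ≠ 0) : ⟪α, coroot α⟫ = 2 := by
  have h : ⟪α, α⟫ ≠ 0 := by
    simpa using fun h => hα ((inner_self_eq_zero (𝕜 := ℝ)).mp h)
  rw [inner_coroot_eq']
  field_simp

lemma sRefl_self {α : V} (hα : α ≠ 0) : sRefl α α = -α := by
  simp [sRefl, inner_coroot_self hα, two_smul]

lemma inner_coroot_eq {α v : V} : ⟪v, coroot α⟫ = (2 / ⟪α, α⟫) * ⟪v, α⟫ :=
  inner_coroot_eq'

lemma inner_sRefl (α x y : V) : ⟪sRefl α x, sRefl α y⟫ = ⟪x, y⟫ := by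
  rcases eq_or_ne α 0 with rfl | hα
  · simp [sRefl, coroot]
  · have h : ⟪α, α⟫ ≠ 0 := by
      simpa using fun h => hα ((inner_self_eq_zero (𝕜 := ℝ)).mp h)
    simp only [sRefl, inner_sub_left, inner_sub_right, inner_smul_left, inner_smul_right,
      inner_coroot_eq, real_inner_comm α x, conj_trivial]
    field_simp
    ring_nf
    rw [real_inner_comm y α]
    ring

lemma sRefl_sRefl (α v : V) : sRefl α (sRefl α v) = v := by
  rcases eq_or_ne α 0 with rfl | hα
  · simp [sRefl, coroot]
  · simp only [sRefl, inner_sub_left, inner_smul_left, inner_coroot_self hα,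
      RCLike.star_def, starRingEnd_apply, star_trivial]
    have : (⟪v, coroot α⟫ - ⟪v, coroot α⟫ * 2) • α = (- ⟪v, coroot α⟫) • α := by ring_nf
    rw [this]
    simp [sub_smul, neg_smul]

end Basics
namespace RootSystemData

variable (R : RootSystemData V)

/-- Linear, inner-product-preserving, root-preserving map. -/
def IsGoodMap (w : V → V) : Prop :=
  IsLinearMap ℝ w ∧ (∀ x y : V, ⟪w x, w y⟫ = ⟪x, y⟫) ∧ (∀ α ∈ R.roots, w α ∈ R.roots)

omit [NormedAddCommGroup V] [InnerProductSpace ℝ V] in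
lemma foldr_comp_append (L1 L2 : List (V → V)) :
    (L1 ++ L2).foldr (· ∘ ·) id = L1.foldr (· ∘ ·) id ∘ L2.foldr (· ∘ ·) id := by
  induction L1 with
  | nil => simp
  | cons f L ih => simp [ih]; rfl

lemma weyl_id : (id : V → V) ∈ R.weyl := ⟨[], by simp, rfl⟩

lemma weyl_comp {w w' : V → V} (hw : w ∈ R.weyl) (hw' : w' ∈ R.weyl) :
    w ∘ w' ∈ R.weyl := by
  obtain ⟨l1, h1, rfl⟩ := hw
  obtain ⟨l2, h2, rfl⟩ := hw'
  refine ⟨l1 ++ l2, ?_, ?_⟩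
  · intro a ha
    rcases List.mem_append.mp ha with h | h
    exacts [h1 a h, h2 a h]
  · rw [List.map_append, foldr_comp_append]

lemma sRefl_mem_weyl {α : V} (hα : α ∈ R.roots) : sRefl α ∈ R.weyl :=
  ⟨[α], by simpa using hα, rfl⟩

lemma foldr_goodMap : ∀ l : List V, (∀ α ∈ l, α ∈ R.roots) →
    R.IsGoodMap ((l.map sRefl).foldr (· ∘ ·) id) := by
  intro l
  induction l with
  | nil =>
    exact fun _ => ⟨⟨fun x y => rfl, fun c x => rfl⟩, fun x y => rfl, fun α h => h⟩
  | cons a l ih =>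
    intro hl
    have ha : a ∈ R.roots := hl a List.mem_cons_self
    obtain ⟨hlin, hinn, hroots⟩ := ih (fun α h => hl α (List.mem_cons_of_mem a h))
    have hcomp : ((a :: l).map sRefl).foldr (· ∘ ·) id
        = sRefl a ∘ (l.map sRefl).foldr (· ∘ ·) id := rfl
    rw [hcomp]
    refine ⟨⟨fun x y => ?_, fun c x => ?_⟩, fun x y => ?_, fun α h => ?_⟩
    · simp [Function.comp, hlin.map_add, (isLinearMap_sRefl a).map_add]
    · simp [Function.comp, hlin.map_smul, (isLinearMap_sRefl a).map_smul]
    · simp [Function.comp, inner_sRefl, hinn]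
    · exact R.refl_mem a ha _ (hroots α h)

lemma weyl_goodMap {w : V → V} (hw : w ∈ R.weyl) : R.IsGoodMap w := by
  obtain ⟨l, hl, rfl⟩ := hw
  exact R.foldr_goodMap l hl

lemma weyl_inv {w : V → V} (hw : w ∈ R.weyl) :
    ∃ w' ∈ R.weyl, (∀ x, w (w' x) = x) ∧ (∀ x, w' (w x) = x) := by
  obtain ⟨l, hl, rfl⟩ := hw
  induction l with
  | nil => exact ⟨id, R.weyl_id, fun x => rfl, fun x => rfl⟩
  | cons a l ih =>
    obtain ⟨u', hu', h1, h2⟩ := ih (fun α h => hl α (List.mem_cons_of_mem a h))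
    have ha : a ∈ R.roots := hl a List.mem_cons_self
    refine ⟨u' ∘ sRefl a, R.weyl_comp hu' (R.sRefl_mem_weyl ha), fun x => ?_, fun x => ?_⟩
    · show sRefl a ((l.map sRefl).foldr (· ∘ ·) id (u' (sRefl a x))) = x
      rw [h1, sRefl_sRefl]
    · show u' (sRefl a (sRefl a ((l.map sRefl).foldr (· ∘ ·) id x))) = x
      rw [sRefl_sRefl, h2]

lemma mem_orbit_self (v : V) : v ∈ R.orbit v := ⟨id, R.weyl_id, rfl⟩

lemma orbit_stable {v x : V} {w : V → V} (hw : w ∈ R.weyl) (hx : x ∈ R.orbit v) :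
    w x ∈ R.orbit v := by
  obtain ⟨w', hw', rfl⟩ := hx
  exact ⟨w ∘ w', R.weyl_comp hw hw', rfl⟩

end RootSystemData
namespace RootSystemData

variable (R : RootSystemData V)

/-- The simple roots as a basis of `V`. -/
def basis : Module.Basis (Fin R.n) ℝ V := Module.Basis.mk R.simple_li (by rw [R.simple_span])

lemma basis_eq (i : Fin R.n) : R.basis i = R.simple i := by
  simp [basis]

lemma repr_combo (c : Fin R.n → ℝ) (j : Fin R.n) :
    R.basis.repr (∑ i, c i • R.simple i) j = c j := by
  have h : (∑ i, c i • R.simple i) = ∑ i, c i • R.basis i := by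
    simp [basis_eq]
  rw [h]
  simp [Finsupp.single_apply]

lemma simple_root (i : Fin R.n) : R.simple i ∈ R.roots := R.pos_subset (R.simple_mem i)

lemma simple_ne_zero (i : Fin R.n) : R.simple i ≠ 0 := by
  intro h
  exact R.roots_nonzero (h ▸ R.simple_root i)

lemma repr_pos_nonneg {β : V} (hβ : β ∈ R.pos) (j : Fin R.n) : 0 ≤ R.basis.repr β j := by
  obtain ⟨c, hc⟩ := R.pos_combo β hβ
  rw [hc, R.repr_combo]
  positivity

lemma eq_zero_of_repr_zero {x : V} (h : ∀ j, R.basis.repr x j = 0) : x = 0 := by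
  have := R.basis.sum_repr x
  rw [← this]
  simp [h]

lemma pos_neg_disjoint {β : V} (h1 : β ∈ R.pos) (h2 : -β ∈ R.pos) : False := by
  have hz : β = 0 := by
    apply R.eq_zero_of_repr_zero
    intro j
    have a1 := R.repr_pos_nonneg h1 j
    have a2 := R.repr_pos_nonneg h2 j
    rw [map_neg] at a2
    simp only [Finsupp.coe_neg, Pi.neg_apply] at a2
    linarith
  exact R.roots_nonzero (hz ▸ R.pos_subset h1)

lemma root_cases {β : V} (hβ : β ∈ R.roots) : β ∈ R.pos ∨ -β ∈ R.pos := by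
  rw [R.pos_union] at hβ
  rcases hβ with h | h
  · exact Or.inl h
  · exact Or.inr (Set.mem_neg.mp h)

lemma root_mem_pos_of_repr_nonneg {β : V} (hβ : β ∈ R.roots)
    (h : ∀ j, 0 ≤ R.basis.repr β j) : β ∈ R.pos := by
  rcases R.root_cases hβ with hp | hn
  · exact hp
  · exfalso
    apply R.roots_nonzero
    have hz : β = 0 := by
      apply R.eq_zero_of_repr_zero
      intro j
      have a2 := R.repr_pos_nonneg hn j
      rw [map_neg] at a2
      simp only [Finsupp.coe_neg, Pi.neg_apply] at a2
      linarith [h j]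
    exact hz ▸ hβ

lemma inner_coroot_nonneg_iff {u α : V} (hα : α ≠ 0) :
    0 ≤ ⟪u, coroot α⟫ ↔ 0 ≤ ⟪u, α⟫ := by
  rw [inner_coroot_eq]
  have hne : ⟪α, α⟫ ≠ 0 := by
    simpa using fun h => hα ((inner_self_eq_zero (𝕜 := ℝ)).mp h)
  have hpos : 0 < ⟪α, α⟫ := lt_of_le_of_ne real_inner_self_nonneg (Ne.symm hne)
  constructor
  · intro h
    nlinarith [div_pos (by norm_num : (0:ℝ) < 2) hpos]
  · intro h
    positivity

/-- A dominant vector pairs nonnegatively with everything whose coordinates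
are nonnegative. -/
lemma inner_nonneg_of_dominant {y x : V} (hy : ∀ i, 0 ≤ ⟪y, coroot (R.simple i)⟫)
    (hx : ∀ j, 0 ≤ R.basis.repr x j) : 0 ≤ ⟪y, x⟫ := by
  have hsimple : ∀ i, 0 ≤ ⟪y, R.simple i⟫ := fun i =>
    (inner_coroot_nonneg_iff (R.simple_ne_zero i)).mp (hy i)
  have hrepr : x = ∑ j, R.basis.repr x j • R.simple j := by
    conv_lhs => rw [← R.basis.sum_repr x]
    simp [basis_eq]
  rw [hrepr, inner_sum]
  apply Finset.sum_nonneg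
  intro j _
  rw [real_inner_smul_right]
  exact mul_nonneg (hx j) (hsimple j)

lemma pos_inner_nonneg_of_dominant {y β : V} (hy : ∀ i, 0 ≤ ⟪y, coroot (R.simple i)⟫)
    (hβ : β ∈ R.pos) : 0 ≤ ⟪y, β⟫ :=
  R.inner_nonneg_of_dominant hy (R.repr_pos_nonneg hβ)

/-- Fact: the simple reflection `s_i` maps positive roots other than `αᵢ`
to positive roots. -/
lemma sRefl_simple_pos {β : V} (i : Fin R.n) (hβ : β ∈ R.pos) (hne : β ≠ R.simple i) :
    sRefl (R.simple i) β ∈ R.pos := by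
  set γ := sRefl (R.simple i) β with hγ
  have hγroot : γ ∈ R.roots := R.refl_mem _ (R.simple_root i) _ (R.pos_subset hβ)
  have hreprγ : ∀ j, R.basis.repr γ j
      = R.basis.repr β j - ⟪β, coroot (R.simple i)⟫ * R.basis.repr (R.simple i) j := by
    intro j
    rw [hγ, sRefl_def, map_sub, map_smul]
    simp
  have hrepr_simple : ∀ j, R.basis.repr (R.simple i) j = if i = j then 1 else 0 := by
    intro j
    rw [← R.basis_eq, R.basis.repr_self]
    simp [Finsupp.single_apply]
  rcases R.root_cases hγroot with h | h
  · exact h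
  · exfalso
    -- all coordinates of γ are ≤ 0, so coordinates of β away from i vanish
    have hγle : ∀ j, R.basis.repr γ j ≤ 0 := by
      intro j
      have a2 := R.repr_pos_nonneg h j
      rw [map_neg] at a2
      simp only [Finsupp.coe_neg, Pi.neg_apply] at a2
      linarith
    have hβj : ∀ j, j ≠ i → R.basis.repr β j = 0 := by
      intro j hj
      have h1 := hγle j
      rw [hreprγ j, hrepr_simple j, if_neg (fun hh => hj hh.symm)] at h1
      have h2 := R.repr_pos_nonneg hβ j
      linarith
    have hβeq : β = R.basis.repr β i • R.simple i := by
      conv_lhs => rw [← R.basis.sum_repr β]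
      rw [Finset.sum_eq_single i]
      · rw [basis_eq]
      · intro j _ hj
        rw [hβj j hj]
        simp
      · intro hi
        exact absurd (Finset.mem_univ i) hi
    have hroot : R.basis.repr β i • R.simple i ∈ R.roots := hβeq ▸ R.pos_subset hβ
    rcases R.reduced _ (R.simple_root i) _ hroot with he | he
    · exact hne (hβeq.trans he)
    · apply R.pos_neg_disjoint hβ
      rw [hβeq, he]
      simpa using R.simple_mem i
end RootSystemData
lemma sRefl_conj {g : V → V} (hg : IsLinearMap ℝ g)
    (hinner : ∀ x y : V, ⟪g x, g y⟫ = ⟪x, y⟫) (α v : V) :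
    sRefl (g α) (g v) = g (sRefl α v) := by
  have hco : coroot (g α) = g (coroot α) := by
    rw [coroot, coroot, hinner, hg.map_smul]
  rw [sRefl_def, sRefl_def, hco, hinner, hg.map_sub, hg.map_smul]

namespace RootSystemData

variable (R : RootSystemData V)

lemma wordProd_nil : R.wordProd [] = id := rfl

lemma wordProd_cons (i : Fin R.n) (l : List (Fin R.n)) :
    R.wordProd (i :: l) = sRefl (R.simple i) ∘ R.wordProd l := rfl

lemma wordProd_singleton (i : Fin R.n) : R.wordProd [i] = sRefl (R.simple i) := rfl

lemma wordProd_append (l l' : List (Fin R.n)) :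
    R.wordProd (l ++ l') = R.wordProd l ∘ R.wordProd l' := by
  unfold wordProd
  rw [List.map_append, foldr_comp_append]

lemma wordProd_mem_weyl (l : List (Fin R.n)) : R.wordProd l ∈ R.weyl := by
  refine ⟨l.map R.simple, ?_, ?_⟩
  · intro a ha
    obtain ⟨i, _, rfl⟩ := List.mem_map.mp ha
    exact R.simple_root i
  · rw [List.map_map]
    rfl

lemma wordProd_goodMap (l : List (Fin R.n)) : R.IsGoodMap (R.wordProd l) :=
  R.weyl_goodMap (R.wordProd_mem_weyl l)

lemma sum_repr_pos_ge_one {β : V} (hβ : β ∈ R.pos) : 1 ≤ ∑ i, R.basis.repr β i := by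
  obtain ⟨c, hc⟩ := R.pos_combo β hβ
  have hrepr : ∀ j, R.basis.repr β j = (c j : ℝ) := fun j => by rw [hc, R.repr_combo]
  by_cases hz : ∀ i, c i = 0
  · exfalso
    apply R.roots_nonzero
    have : β = 0 := by
      rw [hc]
      simp [hz]
    exact this ▸ R.pos_subset hβ
  · push_neg at hz
    obtain ⟨i, hi⟩ := hz
    have h1 : (1 : ℝ) ≤ (c i : ℝ) := by exact_mod_cast Nat.one_le_iff_ne_zero.mpr hi
    calc (1:ℝ) ≤ (c i : ℝ) := h1
    _ = R.basis.repr β i := (hrepr i).symm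
    _ ≤ ∑ j, R.basis.repr β j := by
        apply Finset.single_le_sum (fun j _ => ?_) (Finset.mem_univ i)
        rw [hrepr j]
        positivity

lemma sRefl_pos_word : ∀ k : ℕ, ∀ β ∈ R.pos, (∑ i, R.basis.repr β i) ≤ k →
    ∃ l, sRefl β = R.wordProd l := by
  intro k
  induction k with
  | zero =>
    intro β hβ hsum
    exfalso
    have := R.sum_repr_pos_ge_one hβ
    norm_num at hsum
    linarith
  | succ k ih =>
    intro β hβ hsum
    by_cases hsimp : ∃ i, β = R.simple i
    · obtain ⟨i, rfl⟩ := hsimp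
      exact ⟨[i], (R.wordProd_singleton i).symm⟩
    · push_neg at hsimp
      -- find j with ⟪simple j, β⟫ > 0
      have hβ0 : β ≠ 0 := fun h => R.roots_nonzero (h ▸ R.pos_subset hβ)
      have hip : 0 < ⟪β, β⟫ := by
        have hne : ⟪β, β⟫ ≠ 0 := by
          simpa using fun h => hβ0 ((inner_self_eq_zero (𝕜 := ℝ)).mp h)
        exact lt_of_le_of_ne real_inner_self_nonneg (Ne.symm hne)
      have hrepr : (∑ j, R.basis.repr β j • R.simple j) = β := by
        conv_rhs => rw [← R.basis.sum_repr β]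
        simp [basis_eq]
      have hexpand : ⟪β, β⟫ = ∑ j, R.basis.repr β j * ⟪R.simple j, β⟫ := by
        nth_rewrite 1 [← hrepr]
        rw [sum_inner]
        simp [real_inner_smul_left]
      have hexj : ∃ j, 0 < ⟪R.simple j, β⟫ := by
        by_contra hcon
        push_neg at hcon
        have : ⟪β, β⟫ ≤ 0 := by
          rw [hexpand]
          apply Finset.sum_nonpos
          intro j _
          exact mul_nonpos_of_nonneg_of_nonpos (R.repr_pos_nonneg hβ j) (hcon j)
        linarith
      obtain ⟨j, hj⟩ := hexj
      set m := ⟪β, coroot (R.simple j)⟫ with hm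
      have hmpos : 0 < m := by
        rw [hm, inner_coroot_eq]
        have hne : ⟪R.simple j, R.simple j⟫ ≠ 0 := by
          simpa using fun h => (R.simple_ne_zero j) ((inner_self_eq_zero (𝕜 := ℝ)).mp h)
        have hpos2 : 0 < ⟪R.simple j, R.simple j⟫ :=
          lt_of_le_of_ne real_inner_self_nonneg (Ne.symm hne)
        have hj' : 0 < ⟪β, R.simple j⟫ := by rwa [real_inner_comm]
        exact mul_pos (by positivity) hj'
      have hm1 : 1 ≤ m := by
        obtain ⟨mz, hmz⟩ := R.crystallographic _ (R.simple_root j) _ (R.pos_subset hβ)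
        rw [hm, hmz] at hmpos ⊢
        exact_mod_cast hmpos
      have hβne : β ≠ R.simple j := hsimp j
      set γ := sRefl (R.simple j) β with hγ
      have hγpos : γ ∈ R.pos := R.sRefl_simple_pos j hβ hβne
      have hsumγ : (∑ i, R.basis.repr γ i) = (∑ i, R.basis.repr β i) - m := by
        have : γ = β - m • R.simple j := rfl
        have hone : ∑ i, R.basis.repr (R.simple j) i = 1 := by
          rw [← R.basis_eq, R.basis.repr_self]
          simp [Finsupp.single_apply]
        rw [this, map_sub, map_smul]
        simp only [Finsupp.coe_sub, Finsupp.coe_smul, Pi.sub_apply, Pi.smul_apply, smul_eq_mul]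
        rw [Finset.sum_sub_distrib, ← Finset.mul_sum, hone, mul_one]
      have hsums : (∑ i, R.basis.repr γ i) ≤ k := by
        push_cast at hsum ⊢
        rw [hsumγ]
        linarith
      obtain ⟨l, hl⟩ := ih γ hγpos hsums
      -- β = sRefl (simple j) γ
      have hβγ : β = sRefl (R.simple j) γ := by rw [hγ, sRefl_sRefl]
      have hgood := R.wordProd_goodMap [j]
      refine ⟨j :: (l ++ [j]), ?_⟩
      funext x
      have hg : IsLinearMap ℝ (sRefl (R.simple j)) := isLinearMap_sRefl _
      have hginner : ∀ x y : V, ⟪sRefl (R.simple j) x, sRefl (R.simple j) y⟫ = ⟪x, y⟫ :=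
        fun x y => inner_sRefl _ x y
      calc sRefl β x = sRefl (sRefl (R.simple j) γ) (sRefl (R.simple j) (sRefl (R.simple j) x)) := by
            rw [← hβγ, sRefl_sRefl]
      _ = sRefl (R.simple j) (sRefl γ (sRefl (R.simple j) x)) := sRefl_conj hg hginner γ _
      _ = R.wordProd (j :: (l ++ [j])) x := by
            rw [wordProd_cons, wordProd_append, wordProd_singleton, hl]
            rfl

lemma sRefl_root_word {α : V} (hα : α ∈ R.roots) : ∃ l, sRefl α = R.wordProd l := by
  rcases R.root_cases hα with h | h
  · obtain ⟨k, hk⟩ := exists_nat_ge (∑ i, R.basis.repr α i)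
    exact R.sRefl_pos_word k α h hk
  · obtain ⟨k, hk⟩ := exists_nat_ge (∑ i, R.basis.repr (-α) i)
    obtain ⟨l, hl⟩ := R.sRefl_pos_word k (-α) h hk
    refine ⟨l, ?_⟩
    rw [← hl, sRefl_neg]

lemma weyl_word {w : V → V} (hw : w ∈ R.weyl) : ∃ l, w = R.wordProd l := by
  obtain ⟨l, hl, rfl⟩ := hw
  induction l with
  | nil => exact ⟨[], rfl⟩
  | cons a l ih =>
    obtain ⟨l', hl'⟩ := ih (fun α h => hl α (List.mem_cons_of_mem a h))
    obtain ⟨la, hla⟩ := R.sRefl_root_word (hl a List.mem_cons_self)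
    refine ⟨la ++ l', ?_⟩
    rw [R.wordProd_append, ← hla, ← hl']
    rfl

lemma scan : ∀ (l : List (Fin R.n)) (β : V), β ∈ R.pos → R.wordProd l β ∈ -R.pos →
    ∃ l₁ j l₂, l = l₁ ++ j :: l₂ ∧ R.wordProd l₂ β = R.simple j := by
  intro l
  induction l with
  | nil =>
    intro β hβ hneg
    exact absurd (Set.mem_neg.mp hneg) (fun h => R.pos_neg_disjoint hβ h)
  | cons j l ih =>
    intro β hβ hneg
    set γ := R.wordProd l β with hγ
    have hγroot : γ ∈ R.roots :=
      (R.wordProd_goodMap l).2.2 β (R.pos_subset hβ)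
    rcases R.root_cases hγroot with h | h
    · -- γ positive; then sRefl (simple j) γ negative forces γ = simple j
      have hsγ : sRefl (R.simple j) γ ∈ -R.pos := by
        rw [hγ]
        exact hneg
      by_cases hne : γ = R.simple j
      · exact ⟨[], j, l, rfl, hne⟩
      · exfalso
        exact R.pos_neg_disjoint (R.sRefl_simple_pos j h hne) (Set.mem_neg.mp hsγ)
    · have : R.wordProd l β ∈ -R.pos := by
        rw [← hγ]
        rw [Set.mem_neg]
        exact h
      obtain ⟨l₁, j', l₂, hdecomp, hword⟩ := ih β hβ this
      exact ⟨j :: l₁, j', l₂, by rw [hdecomp]; rfl, hword⟩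

lemma wordProd_eq_id : ∀ (k : ℕ) (l : List (Fin R.n)), l.length ≤ k →
    (∀ β ∈ R.pos, R.wordProd l β ∈ R.pos) → R.wordProd l = id := by
  intro k
  induction k with
  | zero =>
    intro l hl _
    have : l = [] := List.eq_nil_of_length_eq_zero (Nat.le_zero.mp hl)
    rw [this, wordProd_nil]
  | succ k ih =>
    intro l hl hpos
    rcases List.eq_nil_or_concat l with rfl | ⟨l₀, t, rfl⟩
    · rw [wordProd_nil]
    · simp only [List.concat_eq_append] at hl hpos ⊢
      set α := R.simple t with hα
      have hαpos : α ∈ R.pos := R.simple_mem t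
      have hw : R.wordProd (l₀ ++ [t]) α ∈ R.pos := hpos α hαpos
      have heq : R.wordProd (l₀ ++ [t]) α = - R.wordProd l₀ α := by
        rw [R.wordProd_append, Function.comp_apply, wordProd_singleton,
          sRefl_self (R.simple_ne_zero t)]
        exact ((R.wordProd_goodMap l₀).1.map_neg α)
      have hneg : R.wordProd l₀ α ∈ -R.pos := by
        rw [Set.mem_neg]
        rw [← heq]
        exact hw
      obtain ⟨l₁, j, l₂, hdecomp, hword⟩ := R.scan l₀ α hαpos hneg
      -- conjugation: sRefl (simple j) ∘ wordProd l₂ = wordProd l₂ ∘ sRefl α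
      have hconj : sRefl (R.simple j) ∘ R.wordProd l₂ = R.wordProd l₂ ∘ sRefl α := by
        funext x
        have hgood := R.wordProd_goodMap l₂
        calc sRefl (R.simple j) (R.wordProd l₂ x)
            = sRefl (R.wordProd l₂ α) (R.wordProd l₂ x) := by rw [hword]
        _ = R.wordProd l₂ (sRefl α x) := sRefl_conj hgood.1 hgood.2.1 α x
      have hwp : R.wordProd (l₀ ++ [t]) = R.wordProd (l₁ ++ l₂) := by
        rw [hdecomp]
        have : (l₁ ++ j :: l₂) ++ [t] = l₁ ++ (j :: (l₂ ++ [t])) := by simp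
        rw [this, R.wordProd_append, R.wordProd_append, wordProd_cons, R.wordProd_append,
          wordProd_singleton]
        rw [← hα, ← Function.comp_assoc (sRefl (R.simple j)) (R.wordProd l₂), hconj]
        have hss : (sRefl α) ∘ (sRefl α) = id := by
          funext y
          exact sRefl_sRefl α y
        rw [Function.comp_assoc, hss, Function.comp_id]
      have hlen : (l₁ ++ l₂).length ≤ k := by
        have h1 : (l₀ ++ [t]).length = l₀.length + 1 := by simp
        have h2 : l₀.length = l₁.length + l₂.length + 1 := by
          rw [hdecomp]
          simp only [List.length_append, List.length_cons]
          omega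
        rw [h1, h2] at hl
        simp only [List.length_append]
        omega
      have hpos' : ∀ β ∈ R.pos, R.wordProd (l₁ ++ l₂) β ∈ R.pos := by
        intro β hβ
        rw [← hwp]
        exact hpos β hβ
      rw [hwp]
      exact ih (l₁ ++ l₂) hlen hpos'

end RootSystemData
namespace RootSystemData

variable (R : RootSystemData V)

/-- The inversion set of `w`. -/
def invSet (w : V → V) : Set V := {β | β ∈ R.pos ∧ w β ∈ -R.pos}

lemma invSet_finite (w : V → V) : (R.invSet w).Finite :=
  R.roots_finite.subset (fun β hβ => R.pos_subset hβ.1)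

lemma pos_maps_pos_of_simples {w : V → V} (hw : w ∈ R.weyl)
    (h : ∀ i, w (R.simple i) ∈ R.pos) : ∀ β ∈ R.pos, w β ∈ R.pos := by
  intro β hβ
  obtain ⟨hlin, _, hroots⟩ := R.weyl_goodMap hw
  set L : V →ₗ[ℝ] V := IsLinearMap.mk' w hlin with hL
  have hwβroot : w β ∈ R.roots := hroots β (R.pos_subset hβ)
  apply R.root_mem_pos_of_repr_nonneg hwβroot
  intro j
  obtain ⟨c, hc⟩ := R.pos_combo β hβ
  have hwβ : w β = ∑ i, (c i : ℝ) • w (R.simple i) := by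
    show L β = ∑ i, (c i : ℝ) • L (R.simple i)
    rw [hc, map_sum]
    simp
  rw [hwβ, map_sum]
  simp only [map_smul, Finsupp.coe_finset_sum, Finsupp.coe_smul, Finset.sum_apply,
    Pi.smul_apply, smul_eq_mul]
  apply Finset.sum_nonneg
  intro i _
  exact mul_nonneg (by positivity) (R.repr_pos_nonneg (h i) j)

lemma exists_simple_neg {w : V → V} (hw : w ∈ R.weyl) (hne : (R.invSet w).Nonempty) :
    ∃ i, w (R.simple i) ∈ -R.pos := by
  by_contra hcon
  push_neg at hcon
  obtain ⟨β, hβpos, hβneg⟩ := hne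
  have hsim : ∀ i, w (R.simple i) ∈ R.pos := by
    intro i
    have hroot : w (R.simple i) ∈ R.roots := (R.weyl_goodMap hw).2.2 _ (R.simple_root i)
    rcases R.root_cases hroot with h | h
    · exact h
    · exact absurd (Set.mem_neg.mpr h) (hcon i)
  exact absurd (R.pos_maps_pos_of_simples hw hsim β hβpos)
    (fun h => R.pos_neg_disjoint h (Set.mem_neg.mp hβneg))

lemma weyl_id_of_invSet_empty {w : V → V} (hw : w ∈ R.weyl) (hemp : R.invSet w = ∅) :
    w = id := by
  obtain ⟨l, rfl⟩ := R.weyl_word hw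
  apply R.wordProd_eq_id l.length l le_rfl
  intro β hβ
  have hroot : R.wordProd l β ∈ R.roots := (R.wordProd_goodMap l).2.2 β (R.pos_subset hβ)
  rcases R.root_cases hroot with h | h
  · exact h
  · exfalso
    have : β ∈ R.invSet (R.wordProd l) := ⟨hβ, Set.mem_neg.mpr h⟩
    rw [hemp] at this
    exact this

/-- Key Lemma: for dominant `u` and `w` in the Weyl group, `u - w u` has
nonnegative coordinates in the basis of simple roots. -/
lemma dominant_sub_weyl : ∀ (k : ℕ) (w : V → V), w ∈ R.weyl → (R.invSet w).ncard ≤ k →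
    ∀ u : V, R.IsDominant u → ∀ j, 0 ≤ R.basis.repr (u - w u) j := by
  intro k
  induction k with
  | zero =>
    intro w hw hcard u hu j
    have hemp : R.invSet w = ∅ := by
      rw [← Set.ncard_eq_zero (R.invSet_finite w)]
      omega
    rw [R.weyl_id_of_invSet_empty hw hemp]
    simp
  | succ k ih =>
    intro w hw hcard u hu j
    rcases Set.eq_empty_or_nonempty (R.invSet w) with hemp | hne
    · rw [R.weyl_id_of_invSet_empty hw hemp]
      simp
    · obtain ⟨i, hi⟩ := R.exists_simple_neg hw hne
      have hαmem : R.simple i ∈ R.invSet w := ⟨R.simple_mem i, hi⟩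
      set si := sRefl (R.simple i) with hsi
      set w' := w ∘ si with hw'
      have hw'mem : w' ∈ R.weyl := R.weyl_comp hw (R.sRefl_mem_weyl (R.simple_root i))
      obtain ⟨hlin, _, _⟩ := R.weyl_goodMap hw
      -- inversion set of w' is contained in the image of invSet w minus α_i
      have hsub : R.invSet w' ⊆ si '' (R.invSet w \ {R.simple i}) := by
        rintro β ⟨hβpos, hβneg⟩
        by_cases hne2 : β = R.simple i
        · exfalso
          have h1 : w' β = - w (R.simple i) := by
            rw [hw', hne2]
            show w (si (R.simple i)) = _
            rw [hsi, sRefl_self (R.simple_ne_zero i), hlin.map_neg]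
          have h2 : w' β ∈ R.pos := by
            rw [h1]
            exact Set.mem_neg.mp hi
          exact R.pos_neg_disjoint h2 (Set.mem_neg.mp hβneg)
        · have hsiβ : si β ∈ R.pos := R.sRefl_simple_pos i hβpos hne2
          have hsiβne : si β ≠ R.simple i := by
            intro h
            apply R.pos_neg_disjoint hβpos
            have : β = si (R.simple i) := by rw [← h, hsi, sRefl_sRefl]
            rw [this, hsi, sRefl_self (R.simple_ne_zero i)]
            simpa using R.simple_mem i
          refine ⟨si β, ⟨⟨hsiβ, ?_⟩, hsiβne⟩, ?_⟩
          · exact hβneg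
          · rw [hsi, sRefl_sRefl]
      have hcard' : (R.invSet w').ncard ≤ k := by
        have h1 : (R.invSet w').ncard ≤ (si '' (R.invSet w \ {R.simple i})).ncard :=
          Set.ncard_le_ncard hsub (((R.invSet_finite w).diff).image si)
        have h2 : (si '' (R.invSet w \ {R.simple i})).ncard ≤ (R.invSet w \ {R.simple i}).ncard :=
          Set.ncard_image_le ((R.invSet_finite w).diff)
        have h3 : (R.invSet w \ {R.simple i}).ncard = (R.invSet w).ncard - 1 :=
          Set.ncard_diff_singleton_of_mem hαmem
        have h4 : 0 < (R.invSet w).ncard :=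
          (Set.ncard_pos (R.invSet_finite w)).mpr ⟨_, hαmem⟩
        omega
      have ihw' := ih w' hw'mem hcard' u hu
      -- u - w u = (u - w' u) + ⟪u, coroot α_i⟫ • (-(w α_i))
      have hkey : u - w u = (u - w' u) + ⟪u, coroot (R.simple i)⟫ • (-(w (R.simple i))) := by
        have : w' u = w u - ⟪u, coroot (R.simple i)⟫ • w (R.simple i) := by
          rw [hw']
          show w (si u) = _
          rw [hsi, sRefl_def, hlin.map_sub, hlin.map_smul]
        rw [this]
        rw [smul_neg]
        abel
      rw [hkey, map_add, map_smul]
      simp only [Finsupp.coe_add, Finsupp.coe_smul, Pi.add_apply, Pi.smul_apply, smul_eq_mul]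
      have hnegpos : -(w (R.simple i)) ∈ R.pos := Set.mem_neg.mp hi
      have := R.repr_pos_nonneg hnegpos j
      have hc := hu i
      have := ihw' j
      nlinarith

end RootSystemData
namespace RootSystemData

variable (R : RootSystemData V)

lemma weyl_finite : R.weyl.Finite := by
  classical
  have himg : ((fun (w : V → V) (a : ↥(R.roots_finite.toFinset)) => w a.val) '' R.weyl).Finite := by
    apply Set.Finite.subset (Set.Finite.pi (fun _ : ↥(R.roots_finite.toFinset) => R.roots_finite))
    rintro _ ⟨w, hw, rfl⟩
    intro a _
    exact (R.weyl_goodMap hw).2.2 a.val (R.roots_finite.mem_toFinset.mp a.property)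
  apply Set.Finite.of_finite_image himg
  intro w1 h1 w2 h2 heq
  have hroots : ∀ α ∈ R.roots, w1 α = w2 α := by
    intro α hα
    exact congrFun heq ⟨α, R.roots_finite.mem_toFinset.mpr hα⟩
  set L1 := IsLinearMap.mk' w1 (R.weyl_goodMap h1).1 with hL1
  set L2 := IsLinearMap.mk' w2 (R.weyl_goodMap h2).1 with hL2
  have : L1 = L2 := LinearMap.ext_on R.roots_span hroots
  funext x
  exact DFunLike.congr_fun this x

lemma orbit_finite (v : V) : (R.orbit v).Finite := by
  have : R.orbit v = (fun w : V → V => w v) '' R.weyl := by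
    ext x
    simp [orbit, Set.mem_image, eq_comm]
  rw [this]
  exact R.weyl_finite.image _

lemma orbit_nonempty (v : V) : (R.orbit v).Nonempty := ⟨v, R.mem_orbit_self v⟩

lemma mem_perm_self (v : V) : v ∈ R.perm v :=
  subset_convexHull ℝ _ (R.mem_orbit_self v)

/-- The fundamental coweights: `⟪fcw j, x⟫` is the `j`-th coordinate of `x`
in the basis of simple roots. -/
def fcw (j : Fin R.n) : V :=
  haveI : FiniteDimensional ℝ V := R.basis.finiteDimensional_of_finite
  haveI : CompleteSpace V := FiniteDimensional.complete ℝ V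
  (InnerProductSpace.toDual ℝ V).symm (LinearMap.toContinuousLinearMap (R.basis.coord j))

lemma inner_fcw (j : Fin R.n) (x : V) : ⟪R.fcw j, x⟫ = R.basis.repr x j := by
  haveI : FiniteDimensional ℝ V := R.basis.finiteDimensional_of_finite
  haveI : CompleteSpace V := FiniteDimensional.complete ℝ V
  rw [fcw, InnerProductSpace.toDual_symm_apply]
  simp [Module.Basis.coord]

/-- Every Weyl orbit contains a point in the closed fundamental chamber. -/
lemma exists_dominant_in_orbit (x : V) :
    ∃ y ∈ R.orbit x, R.IsDominant y := by
  set δ : V := ∑ j, R.fcw j with hδ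
  have hδsimple : ∀ i, ⟪δ, R.simple i⟫ = 1 := by
    intro i
    rw [hδ, sum_inner]
    have : ∀ j, ⟪R.fcw j, R.simple i⟫ = if i = j then 1 else 0 := by
      intro j
      rw [R.inner_fcw, ← R.basis_eq, R.basis.repr_self]
      simp [Finsupp.single_apply]
    simp [this]
  obtain ⟨y, hy, hymax⟩ := Set.exists_max_image (R.orbit x) (fun z => ⟪δ, z⟫)
    (R.orbit_finite x) (R.orbit_nonempty x)
  refine ⟨y, hy, ?_⟩
  intro i
  by_contra hcon
  push_neg at hcon
  have hsy : sRefl (R.simple i) y ∈ R.orbit x :=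
    R.orbit_stable (R.sRefl_mem_weyl (R.simple_root i)) hy
  have : ⟪δ, sRefl (R.simple i) y⟫ = ⟪δ, y⟫ - ⟪y, coroot (R.simple i)⟫ := by
    rw [sRefl_def, inner_sub_right, real_inner_smul_right, hδsimple i, mul_one]
  have hgt : (⟪δ, y⟫ : ℝ) < ⟪δ, sRefl (R.simple i) y⟫ := by
    rw [this]
    linarith
  exact absurd (hymax _ hsy) (by simpa using hgt)

/-- Dominance implies membership in the permutohedron. -/
lemma mem_perm_of_repr_le {u v : V} (hu : R.IsDominant u) (hv : R.IsDominant v)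
    (h : ∀ j, 0 ≤ R.basis.repr (v - u) j) : u ∈ R.perm v := by
  haveI : FiniteDimensional ℝ V := R.basis.finiteDimensional_of_finite
  haveI : CompleteSpace V := FiniteDimensional.complete ℝ V
  by_contra hcon
  have hconv : Convex ℝ (R.perm v) := convex_convexHull ℝ _
  have hclosed : IsClosed (R.perm v) := ((R.orbit_finite v).isCompact_convexHull (𝕜 := ℝ)).isClosed
  obtain ⟨f, c, hfc, hcf⟩ := geometric_hahn_banach_closed_point hconv hclosed hcon
  set x₀ := (InnerProductSpace.toDual ℝ V).symm f with hx₀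
  have hfx : ∀ z : V, ⟪x₀, z⟫ = f z := fun z => InnerProductSpace.toDual_symm_apply
  obtain ⟨y, hy, hydom⟩ := R.exists_dominant_in_orbit x₀
  obtain ⟨w, hw, rfl⟩ := hy
  obtain ⟨w', hw', hww', hw'w⟩ := R.weyl_inv hw
  obtain ⟨hlin, hinner, _⟩ := R.weyl_goodMap hw
  -- the chain of inequalities
  have e1 : ⟪x₀, u⟫ = ⟪w x₀, w u⟫ := (hinner x₀ u).symm
  have e2 : (⟪w x₀, w u⟫ : ℝ) ≤ ⟪w x₀, u⟫ := by
    have hge : (0:ℝ) ≤ ⟪w x₀, u - w u⟫ :=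
      R.inner_nonneg_of_dominant hydom
        (R.dominant_sub_weyl (R.invSet w).ncard w hw le_rfl u hu)
    have := inner_sub_right (𝕜 := ℝ) (w x₀) u (w u)
    linarith
  have e3 : (⟪w x₀, u⟫ : ℝ) ≤ ⟪w x₀, v⟫ := by
    have hge : (0:ℝ) ≤ ⟪w x₀, v - u⟫ := R.inner_nonneg_of_dominant hydom h
    have := inner_sub_right (𝕜 := ℝ) (w x₀) v u
    linarith
  have e4 : (⟪w x₀, v⟫ : ℝ) = ⟪x₀, w' v⟫ := by
    conv_lhs => rw [show v = w (w' v) from (hww' v).symm]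
    exact hinner x₀ (w' v)
  have e5 : f (w' v) < c := hfc _ (subset_convexHull ℝ _ ⟨w', hw', rfl⟩)
  have e6 : c < f u := hcf
  rw [← hfx] at e5 e6
  linarith [e1, e2, e3, e4, e5, e6]

lemma repr_le_of_mem_perm {v x : V} (hv : R.IsDominant v) (hx : x ∈ R.perm v) :
    ∀ j, R.basis.repr x j ≤ R.basis.repr v j := by
  have hsub : R.perm v ⊆ {x | ∀ j, R.basis.repr x j ≤ R.basis.repr v j} := by
    apply convexHull_min
    · rintro _ ⟨w, hw, rfl⟩ j
      have hrepr := R.dominant_sub_weyl (R.invSet w).ncard w hw le_rfl v hv j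
      rw [map_sub] at hrepr
      simp only [Finsupp.coe_sub, Pi.sub_apply] at hrepr
      linarith
    · have heq : {x : V | ∀ j, R.basis.repr x j ≤ R.basis.repr v j}
          = ⋂ j, {x : V | R.basis.repr x j ≤ R.basis.repr v j} := by
        ext z; simp
      rw [heq]
      apply convex_iInter
      intro j
      exact convex_halfSpace_le ⟨fun a b => by simp, fun r a => by simp⟩ _
  exact hsub hx

lemma perm_mono {u v : V} (hu : R.IsDominant u) (hv : R.IsDominant v)
    (h : ∀ j, 0 ≤ R.basis.repr (v - u) j) : R.perm u ⊆ R.perm v := by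
  apply convexHull_min _ (convex_convexHull ℝ _)
  rintro _ ⟨w, hw, rfl⟩
  have humem : u ∈ R.perm v := R.mem_perm_of_repr_le hu hv h
  obtain ⟨w', hw', hww', hw'w⟩ := R.weyl_inv hw
  have hlin := (R.weyl_goodMap hw).1
  have horb : w '' R.orbit v = R.orbit v := by
    ext z
    constructor
    · rintro ⟨_, ⟨w'', hw'', rfl⟩, rfl⟩
      exact ⟨w ∘ w'', R.weyl_comp hw hw'', rfl⟩
    · rintro ⟨w'', hw'', rfl⟩
      exact ⟨w' (w'' v), ⟨w' ∘ w'', R.weyl_comp hw' hw'', rfl⟩, (hww' (w'' v))⟩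
  have himg : w '' R.perm v = R.perm v := by
    unfold perm
    rw [hlin.image_convexHull, horb]
  show w u ∈ R.perm v
  rw [← himg]
  exact Set.mem_image_of_mem w humem

end RootSystemData
namespace RootSystemData

variable (R : RootSystemData V)

lemma span_int_roots_eq :
    Submodule.span ℤ R.roots = Submodule.span ℤ (Set.range R.simple) := by
  apply le_antisymm
  · rw [Submodule.span_le]
    intro β hβ
    have hmem : ∀ γ ∈ R.pos, γ ∈ Submodule.span ℤ (Set.range R.simple) := by
      intro γ hγ
      obtain ⟨c, hc⟩ := R.pos_combo γ hγ
      rw [hc]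
      apply Submodule.sum_mem
      intro i _
      have hcast : ((c i : ℝ)) • R.simple i = ((c i : ℤ)) • R.simple i := by
        rw [← Int.cast_smul_eq_zsmul ℝ]
        norm_num
      rw [hcast]
      exact Submodule.smul_mem _ _ (Submodule.subset_span (Set.mem_range_self i))
    rcases R.root_cases hβ with h | h
    · exact hmem β h
    · have := Submodule.neg_mem _ (hmem (-β) h)
      simpa using this
  · rw [Submodule.span_le]
    rintro _ ⟨i, rfl⟩
    exact Submodule.subset_span (R.simple_root i)

end RootSystemData
/-- Proposition 2.1: containment of permutohedra and of discrete permutohedra. -/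
theorem statement0 (R : RootSystemData V) :
    (∀ u v : V, R.IsDominant u → R.IsDominant v →
      (R.perm u ⊆ R.perm v ↔
        ∃ c : Fin R.n → ℝ, (∀ i, 0 ≤ c i) ∧ v - u = ∑ i, c i • R.simple i)) ∧
    (∀ lam mu : V, lam ∈ R.weightLattice → mu ∈ R.weightLattice →
      R.IsDominant lam → R.IsDominant mu →
      (R.permQ mu ⊆ R.permQ lam ↔
        ∃ c : Fin R.n → ℕ, lam - mu = ∑ i, (c i : ℝ) • R.simple i)) := by
  constructor
  · intro u v hu hv
    constructor
    · intro hsub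
      have humem : u ∈ R.perm v := hsub (R.mem_perm_self u)
      have hle := R.repr_le_of_mem_perm hv humem
      refine ⟨fun i => R.basis.repr (v - u) i, ?_, ?_⟩
      · intro i
        rw [map_sub]
        simp only [Finsupp.coe_sub, Pi.sub_apply]
        linarith [hle i]
      · conv_lhs => rw [← R.basis.sum_repr (v - u)]
        exact Finset.sum_congr rfl (fun i _ => by rw [R.basis_eq])
    · rintro ⟨c, hc0, hceq⟩
      apply R.perm_mono hu hv
      intro j
      rw [hceq, R.repr_combo]
      exact hc0 j
  · intro lam mu _hlamP _hmuP hlam hmu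
    constructor
    · intro hsub
      have hmuQ : mu ∈ R.permQ mu := ⟨R.mem_perm_self mu, by
        simp only [Set.mem_setOf_eq, sub_self]
        exact Submodule.zero_mem _⟩
      obtain ⟨hperm, hlat⟩ := hsub hmuQ
      have hle := R.repr_le_of_mem_perm hlam hperm
      have hnonneg : ∀ j, 0 ≤ R.basis.repr (lam - mu) j := by
        intro j
        rw [map_sub]
        simp only [Finsupp.coe_sub, Pi.sub_apply]
        linarith [hle j]
      have hlat' : mu - lam ∈ Submodule.span ℤ R.roots := hlat
      have hspan : lam - mu ∈ Submodule.span ℤ (Set.range R.simple) := by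
        rw [← R.span_int_roots_eq]
        have hneg := Submodule.neg_mem _ hlat'
        rw [neg_sub] at hneg
        exact hneg
      obtain ⟨m, hm⟩ := (Submodule.mem_span_range_iff_exists_fun ℤ).mp hspan
      have hmR : lam - mu = ∑ i, (m i : ℝ) • R.simple i := by
        rw [← hm]
        apply Finset.sum_congr rfl
        intro i _
        rw [← Int.cast_smul_eq_zsmul ℝ]
      have hmnn : ∀ i, 0 ≤ m i := by
        intro i
        have h1 : R.basis.repr (lam - mu) i = (m i : ℝ) := by rw [hmR, R.repr_combo]
        have h2 := hnonneg i
        rw [h1] at h2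
        exact_mod_cast h2
      refine ⟨fun i => (m i).toNat, ?_⟩
      rw [hmR]
      apply Finset.sum_congr rfl
      intro i _
      congr 1
      exact_mod_cast (congrArg (fun z : ℤ => (z : ℝ)) (Int.toNat_of_nonneg (hmnn i))).symm
    · rintro ⟨c, hceq⟩
      rintro x ⟨hxperm, hxlat⟩
      constructor
      · refine R.perm_mono hmu hlam ?_ hxperm
        intro j
        rw [hceq, R.repr_combo]
        positivity
      · rw [Set.mem_setOf_eq] at hxlat ⊢
        have h1 : x - lam = (x - mu) - (lam - mu) := by abel
        rw [h1]
        apply Submodule.sub_mem _ hxlat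
        rw [hceq]
        apply Submodule.sum_mem
        intro i _
        have hcast : ((c i : ℝ)) • R.simple i = ((c i : ℤ)) • R.simple i := by
          rw [← Int.cast_smul_eq_zsmul ℝ]
          norm_num
        rw [hcast]
        exact Submodule.smul_mem _ _ (Submodule.subset_span (R.simple_root i))
end
end

section
/- For every W-invariant function 𝐤:Φ→ℤ_{≥0}, the relations →_{sym,𝐤} and →_{tr,𝐤} on the weight lattice P are terminating: there is no infinite sequence λ₀→λ₁→λ₂→⋯ of firing moves. -/
open RealInnerProductSpace Pointwise

noncomputable section

variable {V : Type*} [NormedAddCommGroup V] [InnerProductSpace ℝ V]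

lemma no_infinite_chain (R : RootSystemData V) (k : V → ℕ) :
    ¬ ∃ f : ℕ → V, ∀ i : ℕ, ∃ α ∈ R.pos,
      f (i + 1) = f i + α ∧ ⟪f i, coroot α⟫ + 1 ≤ (k α : ℝ) := by
  rintro ⟨f, hf⟩
  -- the simple roots form a basis
  let b : Module.Basis (Fin R.n) ℝ V := Module.Basis.mk R.simple_li R.simple_span.ge
  have hb : ∀ i, b i = R.simple i := fun i => Module.Basis.mk_apply _ _ i
  haveI : FiniteDimensional ℝ V := Module.Finite.of_basis b
  -- the functional summing the coordinates, and its dual vector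
  let φ : V →ₗ[ℝ] ℝ := ∑ i, b.coord i
  have hφs : ∀ i, φ (R.simple i) = 1 := by
    intro j
    rw [← hb]
    simp only [φ, LinearMap.coe_sum, Finset.sum_apply, Module.Basis.coord_apply,
      Module.Basis.repr_self, Finsupp.single_apply]
    simp
  let v : V := (InnerProductSpace.toDual ℝ V).symm (LinearMap.toContinuousLinearMap φ)
  have hv : ∀ x : V, ⟪v, x⟫ = φ x := fun x => by
    simp [v, InnerProductSpace.toDual_symm_apply]
  have hvpos : ∀ α ∈ R.pos, (1 : ℝ) ≤ ⟪v, α⟫ := by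
    intro α hα
    obtain ⟨c, hc⟩ := R.pos_combo α hα
    have hφα : φ α = ((∑ i, c i : ℕ) : ℝ) := by
      rw [hc, map_sum]
      push_cast
      congr 1
      ext i
      rw [map_smul, hφs i, smul_eq_mul, mul_one]
    have hcne : (∑ i, c i) ≠ 0 := by
      intro h0
      have : ∀ i, c i = 0 := by
        intro i
        exact Finset.sum_eq_zero_iff.mp h0 i (Finset.mem_univ i)
      have : α = 0 := by
        rw [hc]
        apply Finset.sum_eq_zero
        intro i _
        rw [this i]
        simp
      exact R.roots_nonzero (this ▸ R.pos_subset hα)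
    rw [hv, hφα]
    exact_mod_cast Nat.one_le_iff_ne_zero.mpr hcne
  -- a uniform bound
  have hposfin : R.pos.Finite := R.roots_finite.subset R.pos_subset
  let s : Finset V := hposfin.toFinset
  let t : ℝ := (∑ β ∈ s, ((k β : ℝ) * ⟪β, β⟫ + 1)) / 2
  have hterm_nonneg : ∀ β ∈ s, (0 : ℝ) ≤ (k β : ℝ) * ⟪β, β⟫ + 1 := by
    intro β _
    have := real_inner_self_nonneg (x := β)
    positivity
  have ht : ∀ α ∈ R.pos, (k α : ℝ) * ⟪α, α⟫ + 1 ≤ 2 * t := by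
    intro α hα
    have hαs : α ∈ s := hposfin.mem_toFinset.mpr hα
    have := Finset.single_le_sum hterm_nonneg hαs
    simp only [t]
    linarith
  have ht0 : (0 : ℝ) ≤ t := by
    have : (0 : ℝ) ≤ ∑ β ∈ s, ((k β : ℝ) * ⟪β, β⟫ + 1) :=
      Finset.sum_nonneg hterm_nonneg
    positivity
  set ρ : V := t • v with hρ
  -- the potential function
  set g : ℕ → ℝ := fun i => ⟪f i - ρ, f i - ρ⟫ with hg
  have hg0 : ∀ i, 0 ≤ g i := fun i => real_inner_self_nonneg
  have key : ∀ i, g (i + 1) ≤ g i - 1 := by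
    intro i
    obtain ⟨α, hαpos, hstep, hineq⟩ := hf i
    have hα0 : α ≠ 0 := fun h => R.roots_nonzero (h ▸ R.pos_subset hαpos)
    have hαα : (0 : ℝ) < ⟪α, α⟫ := by rw [real_inner_self_eq_norm_sq]; exact pow_pos (norm_pos_iff.mpr hα0) 2
    have hcor : ⟪f i, coroot α⟫ = 2 / ⟪α, α⟫ * ⟪f i, α⟫ := by
      rw [coroot, real_inner_smul_right]
    have h2 : 2 * ⟪f i, α⟫ ≤ ((k α : ℝ) - 1) * ⟪α, α⟫ := by
      rw [hcor] at hineq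
      have h3 : 2 / ⟪α, α⟫ * ⟪f i, α⟫ ≤ (k α : ℝ) - 1 := by linarith
      have h4 := mul_le_mul_of_nonneg_right h3 hαα.le
      have h5 : 2 / ⟪α, α⟫ * ⟪f i, α⟫ * ⟪α, α⟫ = 2 * ⟪f i, α⟫ := by
        field_simp
      linarith [h5 ▸ h4]
    have hρα : (k α : ℝ) * ⟪α, α⟫ + 1 ≤ 2 * ⟪ρ, α⟫ := by
      have h6 : ⟪ρ, α⟫ = t * ⟪v, α⟫ := real_inner_smul_left _ _ _
      have h7 : t * 1 ≤ t * ⟪v, α⟫ :=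
        mul_le_mul_of_nonneg_left (hvpos α hαpos) ht0
      have := ht α hαpos
      rw [h6]
      linarith
    have hx : f (i + 1) - ρ = (f i - ρ) + α := by
      rw [hstep]; abel
    have hexp : g (i + 1) = g i + 2 * ⟪f i - ρ, α⟫ + ⟪α, α⟫ := by
      simp only [hg, hx]
      rw [real_inner_add_add_self]
    have hsub : ⟪f i - ρ, α⟫ = ⟪f i, α⟫ - ⟪ρ, α⟫ := inner_sub_left _ _ _
    rw [hexp, hsub]
    linarith
  have hdesc : ∀ i : ℕ, g i ≤ g 0 - i := by
    intro i
    induction i with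
    | zero => simp
    | succ m ih =>
      have := key m
      push_cast
      linarith
  obtain ⟨N, hN⟩ := exists_nat_gt (g 0)
  linarith [hg0 N, hdesc N]

/-- Both symmetric and truncated interval-firing are terminating. -/
theorem statement1 (R : RootSystemData V) (k : V → ℕ) (hk : R.IsWInvariant k) :
    (¬ ∃ f : ℕ → V, ∀ i : ℕ, R.symFire k (f i) (f (i + 1))) ∧
    (¬ ∃ f : ℕ → V, ∀ i : ℕ, R.trFire k (f i) (f (i + 1))) := by
  constructor
  · rintro ⟨f, hf⟩
    exact no_infinite_chain R k ⟨f, fun i => by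
      obtain ⟨_, α, hα, heq, _, h2⟩ := hf i
      exact ⟨α, hα, heq, h2⟩⟩
  · rintro ⟨f, hf⟩
    exact no_infinite_chain R k ⟨f, fun i => by
      obtain ⟨_, α, hα, heq, _, h2⟩ := hf i
      exact ⟨α, hα, heq, h2⟩⟩
end
end
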